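/- arXiv:2601.10175 — 2 statements merged into one kernel-verified Lean document; each statement's English description precedes it below -/
import Mathlib

section
/- For any positive integers K and t with t < K, the MN construction yields a (t+1)-regular (K, C(K,t), C(K−1,t−1), C(K,t+1)) PDA: index rows by t-subsets T of [K] and columns by k ∈ [K]; set P(T,k)=* if k ∈ T, and otherwise set P(T,k) equal to the (t+1)-subset T ∪ {k}. This array satisfies all PDA conditions and every integer (i.e., every (t+1)-subset) appears exactly t+1 times. -/
open Finset

/-- The MN construction yields a (t+1)-regular (K, C(K,t), C(K−1,t−1), C(K,t+1)) PDA: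
rows indexed by t-subsets T of [K], columns by k ∈ [K]; P(T,k)=* iff k ∈ T, else
P(T,k) = T ∪ {k}.  All PDA conditions hold and every integer appears exactly t+1 times. -/
theorem mn_pda (K t : ℕ) (ht : 0 < t) (htK : t < K) :
    -- C1: each column contains exactly C(K−1,t−1) stars
    (∀ k : Fin K,
      (univ.filter fun T : {T : Finset (Fin K) // T.card = t} => k ∈ T.1).card
        = Nat.choose (K - 1) (t - 1)) ∧
    -- C2: every (t+1)-subset appears at least once as an integer label
    (∀ A : Finset (Fin K), A.card = t + 1 →
      ∃ (T : {T : Finset (Fin K) // T.card = t}) (k : Fin K),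
        k ∉ T.1 ∧ insert k T.1 = A) ∧
    -- C3: equal labels lie in distinct rows and columns, with stars at symmetric positions
    (∀ (T1 T2 : {T : Finset (Fin K) // T.card = t}) (k1 k2 : Fin K),
      k1 ∉ T1.1 → k2 ∉ T2.1 → insert k1 T1.1 = insert k2 T2.1 →
      (T1, k1) ≠ (T2, k2) →
      T1 ≠ T2 ∧ k1 ≠ k2 ∧ k2 ∈ T1.1 ∧ k1 ∈ T2.1) ∧
    -- (t+1)-regularity: every (t+1)-subset appears exactly t+1 times
    (∀ A : Finset (Fin K), A.card = t + 1 →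
      (univ.filter fun p : {T : Finset (Fin K) // T.card = t} × Fin K =>
        p.2 ∉ p.1.1 ∧ insert p.2 p.1.1 = A).card = t + 1) := by
  refine ⟨?_, ?_, ?_, ?_⟩
  · -- C1
    intro k
    have hbij : (univ.filter fun T : {T : Finset (Fin K) // T.card = t} => k ∈ T.1).card
        = (((univ : Finset (Fin K)).erase k).powersetCard (t - 1)).card := by
      apply Finset.card_bij (fun T _ => T.1.erase k)
      · intro T hT
        simp only [mem_filter, mem_univ, true_and] at hT
        rw [Finset.mem_powersetCard]
        constructor
        · intro x hx
          rw [Finset.mem_erase] at hx ⊢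
          exact ⟨hx.1, Finset.mem_univ x⟩
        · rw [Finset.card_erase_of_mem hT, T.2]
      · intro a ha b hb hab
        simp only [mem_filter, mem_univ, true_and] at ha hb
        apply Subtype.ext
        have : insert k (a.1.erase k) = insert k (b.1.erase k) := by rw [hab]
        rwa [Finset.insert_erase ha, Finset.insert_erase hb] at this
      · intro S hS
        rw [Finset.mem_powersetCard] at hS
        have hkS : k ∉ S := fun h => (Finset.mem_erase.mp (hS.1 h)).1 rfl
        have hcard : (insert k S).card = t := by
          rw [Finset.card_insert_of_notMem hkS, hS.2]
          omega
        refine ⟨⟨insert k S, hcard⟩, ?_, ?_⟩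
        · simp [Finset.mem_insert]
        · simp [Finset.erase_insert hkS]
    rw [hbij, Finset.card_powersetCard, Finset.card_erase_of_mem (Finset.mem_univ k),
      Finset.card_univ, Fintype.card_fin]
  · -- C2
    intro A hA
    have hne : A.Nonempty := Finset.card_pos.mp (by omega)
    obtain ⟨k, hk⟩ := hne
    have hcard : (A.erase k).card = t := by
      rw [Finset.card_erase_of_mem hk, hA]; omega
    exact ⟨⟨A.erase k, hcard⟩, k, Finset.notMem_erase k A,
      Finset.insert_erase hk⟩
  · -- C3
    intro T1 T2 k1 k2 h1 h2 hins hne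
    have hk12 : k1 ≠ k2 := by
      intro h
      subst h
      apply hne
      have : T1.1 = T2.1 := by
        have := congrArg (fun s => Finset.erase s k1) hins
        simpa [Finset.erase_insert h1, Finset.erase_insert h2] using this
      simp [Prod.ext_iff, Subtype.ext this]
    have hk2T1 : k2 ∈ T1.1 := by
      have : k2 ∈ insert k1 T1.1 := by rw [hins]; exact Finset.mem_insert_self _ _
      rcases Finset.mem_insert.mp this with h | h
      · exact absurd h.symm hk12
      · exact h
    have hk1T2 : k1 ∈ T2.1 := by
      have : k1 ∈ insert k2 T2.1 := by rw [← hins]; exact Finset.mem_insert_self _ _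
      rcases Finset.mem_insert.mp this with h | h
      · exact absurd h hk12
      · exact h
    refine ⟨?_, hk12, hk2T1, hk1T2⟩
    intro h
    exact h1 (h ▸ hk1T2)
  · -- regularity
    intro A hA
    have hbij : (univ.filter fun p : {T : Finset (Fin K) // T.card = t} × Fin K =>
        p.2 ∉ p.1.1 ∧ insert p.2 p.1.1 = A).card = A.card := by
      apply Finset.card_bij (fun p _ => p.2)
      · intro p hp
        simp only [mem_filter, mem_univ, true_and] at hp
        rw [← hp.2]; exact Finset.mem_insert_self _ _
      · intro a ha b hb hab
        simp only [mem_filter, mem_univ, true_and] at ha hb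
        have hT : a.1.1 = b.1.1 := by
          have h1 : a.1.1 = A.erase a.2 := by
            rw [← ha.2, Finset.erase_insert ha.1]
          have h2 : b.1.1 = A.erase b.2 := by
            rw [← hb.2, Finset.erase_insert hb.1]
          rw [h1, h2, hab]
        exact Prod.ext (Subtype.ext hT) hab
      · intro k hk
        have hcard : (A.erase k).card = t := by
          rw [Finset.card_erase_of_mem hk, hA]; omega
        exact ⟨(⟨A.erase k, hcard⟩, k), Finset.mem_filter.mpr
          ⟨Finset.mem_univ _, Finset.notMem_erase k A, Finset.insert_erase hk⟩, rfl⟩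
    rw [hbij, hA]
end

section
/- In the MN PDA with parameters K and t, condition C3 holds: if two non-star entries satisfy T1 ∪ {k1} = T2 ∪ {k2} with (T1,k1) ≠ (T2,k2), k1 ∉ T1, k2 ∉ T2, then T1 ≠ T2, k1 ≠ k2, k2 ∈ T1 and k1 ∈ T2 (so the symmetric entries are stars). -/
open Finset

/-- In the MN PDA, condition C3 holds: if two non-star entries share the same
(t+1)-subset label, i.e. T1 ∪ {k1} = T2 ∪ {k2} with (T1,k1) ≠ (T2,k2), k1 ∉ T1,
k2 ∉ T2, then T1 ≠ T2, k1 ≠ k2, k2 ∈ T1 and k1 ∈ T2. -/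
theorem mn_pda_C3 (K t : ℕ) (ht : 0 < t) (htK : t < K)
    (T1 T2 : Finset (Fin K)) (hT1 : T1.card = t) (hT2 : T2.card = t)
    (k1 k2 : Fin K) (hk1 : k1 ∉ T1) (hk2 : k2 ∉ T2)
    (hlabel : insert k1 T1 = insert k2 T2)
    (hne : (T1, k1) ≠ (T2, k2)) :
    T1 ≠ T2 ∧ k1 ≠ k2 ∧ k2 ∈ T1 ∧ k1 ∈ T2 := by
  have hkk : k1 ≠ k2 := by
    intro h
    subst h
    apply hne
    have : T1 = T2 := by
      apply Finset.ext
      intro x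
      constructor
      · intro hx
        have : x ∈ insert k1 T2 := hlabel ▸ Finset.mem_insert_of_mem hx
        rcases Finset.mem_insert.1 this with h | h
        · exact absurd (h ▸ hx) hk1
        · exact h
      · intro hx
        have : x ∈ insert k1 T1 := hlabel ▸ Finset.mem_insert_of_mem hx
        rcases Finset.mem_insert.1 this with h | h
        · exact absurd (h ▸ hx) hk2
        · exact h
    simp [this]
  have h2 : k2 ∈ T1 := by
    have : k2 ∈ insert k1 T1 := hlabel ▸ Finset.mem_insert_self k2 T2
    rcases Finset.mem_insert.1 this with h | h
    · exact absurd h.symm hkk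
    · exact h
  have h1 : k1 ∈ T2 := by
    have : k1 ∈ insert k2 T2 := hlabel ▸ Finset.mem_insert_self k1 T1
    rcases Finset.mem_insert.1 this with h | h
    · exact absurd h hkk
    · exact h
  exact ⟨fun h => hk2 (h ▸ h2), hkk, h2, h1⟩
end
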